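/- A rank 2 absolutely flat real matrix (all entries ±c, c > 0) has exactly 2 row types and exactly 2 column types, where two rows (columns) are of the same type if they are equal or negatives of each other. -/

import Mathlib

open Matrix Submodule Module

private lemma abs_cases' {c x y : ℝ} (hc : 0 < c) (hx : |x| = c) (hy : |y| = c) :
    x = y ∨ x = -y := by
  rcases (abs_eq hc.le).mp hx with h1 | h1 <;> rcases (abs_eq hc.le).mp hy with h2 | h2 <;>
    subst h1 <;> subst h2 <;> simp

private lemma row_types {n : ℕ} (A : Matrix (Fin n) (Fin n) ℝ) (c : ℝ) (hc : 0 < c)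
    (hflat : ∀ i j, |A i j| = c) (hrank : A.rank = 2) :
    ∃ i₁ i₂ : Fin n,
      ¬(A i₁ = A i₂ ∨ A i₁ = -A i₂) ∧
      ∀ i, (A i = A i₁ ∨ A i = -A i₁) ∨ (A i = A i₂ ∨ A i = -A i₂) := by
  have hn : 0 < n := by
    by_contra h
    have := A.rank_le_card_height
    simp [Nat.eq_zero_of_not_pos h, hrank] at this
  -- a flat row is nonzero
  have hnz : ∀ i : Fin n, A i ≠ 0 := by
    intro i h
    have := hflat i ⟨0, hn⟩
    rw [h] at this
    simp at this
    linarith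
  -- if two flat rows are not of the same type, they agree somewhere and disagree somewhere
  have hdiag : ∀ i₁ i₂ : Fin n, ¬(A i₁ = A i₂ ∨ A i₁ = -A i₂) →
      (∃ k, A i₁ k = A i₂ k) ∧ (∃ k, A i₁ k = -A i₂ k) := by
    intro i₁ i₂ h
    push_neg at h
    constructor
    · by_contra hk
      push_neg at hk
      exact h.2 (funext fun k => by
        rcases abs_cases' hc (hflat i₁ k) (hflat i₂ k) with h' | h'
        · exact absurd h' (hk k)
        · simpa using h')
    · by_contra hk
      push_neg at hk
      exact h.1 (funext fun k => by
        rcases abs_cases' hc (hflat i₁ k) (hflat i₂ k) with h' | h'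
        · exact h'
        · exact absurd h' (hk k))
  have hR : finrank ℝ (span ℝ (Set.range A)) = 2 := by
    have h := A.rank_eq_finrank_span_row; rw [hrank] at h; exact h.symm
  -- existence of two rows not of the same type
  have hex : ∃ i₁ i₂ : Fin n, ¬(A i₁ = A i₂ ∨ A i₁ = -A i₂) := by
    by_contra h
    push_neg at h
    set i₀ : Fin n := ⟨0, hn⟩
    have hsub : Set.range A ⊆ (span ℝ ({A i₀} : Set (Fin n → ℝ)) : Set (Fin n → ℝ)) := by
      rintro _ ⟨i, rfl⟩
      rcases h i i₀ with h' | h'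
      · rw [h']; exact subset_span rfl
      · rw [h']
        exact Submodule.neg_mem _ (subset_span rfl)
    have hle : span ℝ (Set.range A) ≤ span ℝ ({A i₀} : Set (Fin n → ℝ)) :=
      span_le.mpr hsub
    have h1 : finrank ℝ (span ℝ ({A i₀} : Set (Fin n → ℝ))) ≤ 1 := by
      simpa using finrank_span_le_card ({A i₀} : Set (Fin n → ℝ))
    have := Submodule.finrank_mono hle
    omega
  obtain ⟨i₁, i₂, hne⟩ := hex
  refine ⟨i₁, i₂, hne, ?_⟩
  have hne' : A i₁ ≠ A i₂ := fun h => hne (Or.inl h)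
  -- linear independence of the two rows
  have hli : LinearIndependent ℝ ((↑) : ({A i₁, A i₂} : Set (Fin n → ℝ)) → (Fin n → ℝ)) := by
    apply linearIndepOn_id_pair (hnz i₁)
    intro a ha
    have habs : |a| = 1 := by
      have := congrFun ha ⟨0, hn⟩
      have h1 := hflat i₁ ⟨0, hn⟩
      have h2 := hflat i₂ ⟨0, hn⟩
      have h3 : a * A i₁ ⟨0, hn⟩ = A i₂ ⟨0, hn⟩ := this
      have : |a * A i₁ ⟨0, hn⟩| = c := by rw [h3]; exact h2
      rw [abs_mul, h1] at this
      field_simp at this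
      exact this
    rcases (abs_eq (by norm_num : (0:ℝ) ≤ 1)).mp habs with h | h
    · subst h
      simp only [one_smul] at ha
      exact hne (Or.inl ha)
    · subst h
      apply hne
      right
      rw [← ha]
      simp
  have hcard : ({A i₁, A i₂} : Set (Fin n → ℝ)).toFinset.card = 2 := by
    rw [Set.toFinset_insert, Set.toFinset_singleton]
    simp [hne']
  have hS : finrank ℝ (span ℝ ({A i₁, A i₂} : Set (Fin n → ℝ))) = 2 := by
    rw [finrank_span_set_eq_card hli, hcard]
  have hle : span ℝ ({A i₁, A i₂} : Set (Fin n → ℝ)) ≤ span ℝ (Set.range A) := by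
    apply span_mono
    rintro x (rfl | rfl)
    · exact ⟨i₁, rfl⟩
    · exact ⟨i₂, rfl⟩
  have heq : span ℝ ({A i₁, A i₂} : Set (Fin n → ℝ)) = span ℝ (Set.range A) :=
    Submodule.eq_of_le_of_finrank_eq hle (by rw [hS, hR])
  intro i
  have hmem : A i ∈ span ℝ ({A i₁, A i₂} : Set (Fin n → ℝ)) := by
    rw [heq]; exact subset_span ⟨i, rfl⟩
  obtain ⟨a, b, hab⟩ := Submodule.mem_span_pair.mp hmem
  obtain ⟨⟨k₁, hk₁⟩, ⟨k₂, hk₂⟩⟩ := hdiag i₁ i₂ hne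
  -- |a + b| = 1
  have hs : |a + b| = 1 := by
    have := congrFun hab k₁
    simp only [Pi.add_apply, Pi.smul_apply, smul_eq_mul] at this
    have h1 : (a + b) * A i₁ k₁ = A i k₁ := by rw [hk₁] at this ⊢; linear_combination this
    have : |(a + b) * A i₁ k₁| = c := by rw [h1]; exact hflat i k₁
    rw [abs_mul, hflat i₁ k₁] at this
    field_simp at this
    exact this
  have ht : |a - b| = 1 := by
    have := congrFun hab k₂
    simp only [Pi.add_apply, Pi.smul_apply, smul_eq_mul] at this
    have h1 : (a - b) * A i₁ k₂ = A i k₂ := by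
      rw [hk₂] at this ⊢; linear_combination this
    have : |(a - b) * A i₁ k₂| = c := by rw [h1]; exact hflat i k₂
    rw [abs_mul, hflat i₁ k₂] at this
    field_simp at this
    exact this
  rcases (abs_eq (by norm_num : (0:ℝ) ≤ 1)).mp hs with h1 | h1 <;>
    rcases (abs_eq (by norm_num : (0:ℝ) ≤ 1)).mp ht with h2 | h2
  · have ha : a = 1 := by linarith
    have hb : b = 0 := by linarith
    subst ha; subst hb
    left; left; rw [← hab]; funext k; simp
  · have ha : a = 0 := by linarith
    have hb : b = 1 := by linarith
    subst ha; subst hb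
    right; left; rw [← hab]; funext k; simp
  · have ha : a = 0 := by linarith
    have hb : b = -1 := by linarith
    subst ha; subst hb
    right; right; rw [← hab]; funext k; simp
  · have ha : a = -1 := by linarith
    have hb : b = 0 := by linarith
    subst ha; subst hb
    left; right; rw [← hab]; funext k; simp

open Matrix
theorem stmt_13 (n : ℕ) (A : Matrix (Fin n) (Fin n) ℝ) (c : ℝ) (hc : 0 < c)
    (hflat : ∀ i j, |A i j| = c) (hrank : A.rank = 2) :
    (∃ i₁ i₂ : Fin n,
      ¬(A i₁ = A i₂ ∨ A i₁ = -A i₂) ∧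
      ∀ i, (A i = A i₁ ∨ A i = -A i₁) ∨ (A i = A i₂ ∨ A i = -A i₂)) ∧
    (∃ j₁ j₂ : Fin n,
      ¬(Aᵀ j₁ = Aᵀ j₂ ∨ Aᵀ j₁ = -Aᵀ j₂) ∧
      ∀ j, (Aᵀ j = Aᵀ j₁ ∨ Aᵀ j = -Aᵀ j₁) ∨
        (Aᵀ j = Aᵀ j₂ ∨ Aᵀ j = -Aᵀ j₂)) := by
  constructor
  · exact row_types A c hc hflat hrank
  · exact row_types Aᵀ c hc (fun i j => hflat j i) (by rw [A.rank_transpose, hrank])
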